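/- Fix integers n ≥ 1 and N ≥ 0. Then lim_{k→∞} F_D(n;k,N) = F_P(n;N): as the alphabet size k tends to infinity, the probability that a uniform random word of length N on k letters has longest strictly decreasing subsequence of length at most n converges to the probability that a uniform random permutation of {1,…,N} has longest increasing subsequence of length at most n. -/

import Mathlib

open scoped BigOperators Topology

/-- The length of the longest strictly decreasing subsequence of the word `w`. -/
noncomputable def decLen {N k : ℕ} (w : Fin N → Fin k) : ℕ :=
  sSup {m | ∃ f : Fin m → Fin N, StrictMono f ∧ StrictAnti (w ∘ f)}

/-- `F_D(n;k,N)`: the probability that a uniform random word of length `N` on `k`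
letters has longest strictly decreasing subsequence of length at most `n`. -/
noncomputable def FD (n k N : ℕ) : ℝ :=
  (Nat.card {w : Fin N → Fin k // decLen w ≤ n} : ℝ) / (k : ℝ) ^ N

/-- The length of the longest increasing subsequence of the permutation `σ`. -/
noncomputable def permIncLen {N : ℕ} (σ : Equiv.Perm (Fin N)) : ℕ :=
  sSup {m | ∃ f : Fin m → Fin N, StrictMono f ∧ StrictMono (σ ∘ f)}

/-- `F_P(n;N)`: the probability that a uniform random permutation of `N` letters
has longest increasing subsequence of length at most `n`. -/
noncomputable def FP (n N : ℕ) : ℝ :=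
  (Nat.card {σ : Equiv.Perm (Fin N) // permIncLen σ ≤ n} : ℝ) /
    (Nat.factorial N : ℝ)

namespace FDaux

variable {N k : ℕ}

/-- decLen of a word of the form `g ∘ rev ∘ u` with `g` strictly monotone. -/
lemma decLen_comp (g : Fin N → Fin k) (hg : StrictMono g) (u : Fin N → Fin N) :
    decLen (fun i => g (Fin.rev (u i))) =
      sSup {m | ∃ f : Fin m → Fin N, StrictMono f ∧ StrictMono (u ∘ f)} := by
  unfold decLen
  congr 1
  ext m
  constructor
  · rintro ⟨f, hf, hanti⟩
    refine ⟨f, hf, fun a b hab => ?_⟩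
    have h1 : g (Fin.rev (u (f b))) < g (Fin.rev (u (f a))) := hanti hab
    have h2 : Fin.rev (u (f b)) < Fin.rev (u (f a)) := hg.lt_iff_lt.mp h1
    exact Fin.rev_lt_rev.mp h2
  · rintro ⟨f, hf, hmono⟩
    refine ⟨f, hf, fun a b hab => ?_⟩
    have h1 : u (f a) < u (f b) := hmono hab
    exact hg (Fin.rev_lt_rev.mpr h1)

/-- The strictly monotone enumeration of a finset, as a map into the ambient type. -/
noncomputable def enum (s : Finset (Fin k)) (hs : s.card = N) : Fin N → Fin k :=
  fun j => (s.orderIsoOfFin hs j : Fin k)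

lemma enum_strictMono (s : Finset (Fin k)) (hs : s.card = N) : StrictMono (enum s hs) :=
  fun a b h => Subtype.coe_lt_coe.mpr ((s.orderIsoOfFin hs).lt_iff_lt.mpr h)

lemma enum_injective (s : Finset (Fin k)) (hs : s.card = N) : Function.Injective (enum s hs) :=
  (enum_strictMono s hs).injective

lemma enum_mem (s : Finset (Fin k)) (hs : s.card = N) (j : Fin N) : enum s hs j ∈ s :=
  (s.orderIsoOfFin hs j).2

lemma image_enum_comp (s : Finset (Fin k)) (hs : s.card = N) (u : Fin N → Fin N)
    (hu : Function.Surjective u) :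
    Finset.image (fun i => enum s hs (u i)) Finset.univ = s := by
  ext x
  simp only [Finset.mem_image, Finset.mem_univ, true_and]
  constructor
  · rintro ⟨i, rfl⟩; exact enum_mem s hs (u i)
  · intro hx
    obtain ⟨j, hj⟩ := hu ((s.orderIsoOfFin hs).symm ⟨x, hx⟩)
    refine ⟨j, ?_⟩
    rw [hj]
    simp [enum]

/-- The map producing a word from a pattern permutation and a letter set. -/
noncomputable def wordOf (p : {σ : Equiv.Perm (Fin N) // permIncLen σ ≤ n} ×
    {s : Finset (Fin k) // s.card = N}) : Fin N → Fin k :=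
  fun i => enum p.2.1 p.2.2 (Fin.rev (p.1.1 i))

lemma wordOf_injective {n : ℕ} (p : {σ : Equiv.Perm (Fin N) // permIncLen σ ≤ n} ×
    {s : Finset (Fin k) // s.card = N}) : Function.Injective (wordOf p) := by
  intro a b hab
  have := enum_injective p.2.1 p.2.2 hab
  have := Fin.rev_injective this
  exact p.1.1.injective this

lemma decLen_wordOf {n : ℕ} (p : {σ : Equiv.Perm (Fin N) // permIncLen σ ≤ n} ×
    {s : Finset (Fin k) // s.card = N}) : decLen (wordOf p) ≤ n := by
  have h := decLen_comp (enum p.2.1 p.2.2) (enum_strictMono p.2.1 p.2.2) (p.1.1 : Fin N → Fin N)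
  have : decLen (wordOf p) = permIncLen p.1.1 := h
  rw [this]
  exact p.1.2

lemma image_wordOf {n : ℕ} (p : {σ : Equiv.Perm (Fin N) // permIncLen σ ≤ n} ×
    {s : Finset (Fin k) // s.card = N}) :
    Finset.image (wordOf p) Finset.univ = p.2.1 :=
  image_enum_comp p.2.1 p.2.2 (fun i => Fin.rev (p.1.1 i))
    (Fin.rev_surjective.comp p.1.1.surjective)

/-- The counting bijection. -/
noncomputable def bij (n : ℕ) (p : {σ : Equiv.Perm (Fin N) // permIncLen σ ≤ n} ×
    {s : Finset (Fin k) // s.card = N}) :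
    {w : Fin N → Fin k // Function.Injective w ∧ decLen w ≤ n} :=
  ⟨wordOf p, wordOf_injective p, decLen_wordOf p⟩

lemma bij_bijective (n : ℕ) : Function.Bijective (bij (N := N) (k := k) n) := by
  constructor
  · rintro ⟨⟨σ, hσ⟩, ⟨s, hs⟩⟩ ⟨⟨σ', hσ'⟩, ⟨s', hs'⟩⟩ h
    have hval : wordOf (n := n) (⟨⟨σ, hσ⟩, ⟨s, hs⟩⟩ : _ × _) =
        wordOf (⟨⟨σ', hσ'⟩, ⟨s', hs'⟩⟩ : _ × _) := congrArg Subtype.val h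
    have hss' : s = s' := by
      have h1 : Finset.image (wordOf (n := n) (⟨⟨σ, hσ⟩, ⟨s, hs⟩⟩ : _ × _)) Finset.univ = s :=
        image_wordOf _
      have h2 : Finset.image (wordOf (n := n) (⟨⟨σ', hσ'⟩, ⟨s', hs'⟩⟩ : _ × _)) Finset.univ = s' :=
        image_wordOf _
      rw [← h1, ← h2, hval]
    subst hss'
    have hσσ' : σ = σ' := by
      apply Equiv.ext
      intro i
      have := congrFun hval i
      simp only [wordOf] at this
      have := enum_injective s hs this
      exact Fin.rev_injective this
    subst hσσ'
    rfl
  · rintro ⟨w, hw, hP⟩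
    set s : Finset (Fin k) := Finset.image w Finset.univ with hsdef
    have hs : s.card = N := by
      rw [hsdef, Finset.card_image_of_injective _ hw, Finset.card_univ, Fintype.card_fin]
    set u : Fin N → Fin N := fun i =>
      Fin.rev ((s.orderIsoOfFin hs).symm ⟨w i, Finset.mem_image_of_mem w (Finset.mem_univ i)⟩)
      with hudef
    have hu_inj : Function.Injective u := by
      intro a b hab
      have h1 := Fin.rev_injective hab
      have h2 := (s.orderIsoOfFin hs).symm.injective h1
      have h3 : w a = w b := congrArg Subtype.val h2
      exact hw h3
    have hu_bij : Function.Bijective u := Finite.injective_iff_bijective.mp hu_inj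
    set σ : Equiv.Perm (Fin N) := Equiv.ofBijective u hu_bij with hσdef
    have hwe : w = fun i => enum s hs (Fin.rev (σ i)) := by
      funext i
      simp only [hσdef, Equiv.ofBijective_apply, hudef, Fin.rev_rev, enum]
      simp
    have hσP : permIncLen σ ≤ n := by
      have h := decLen_comp (enum s hs) (enum_strictMono s hs) (σ : Fin N → Fin N)
      have : decLen w = permIncLen σ := by rw [hwe]; exact h
      rw [← this]
      exact hP
    refine ⟨⟨⟨σ, hσP⟩, ⟨s, hs⟩⟩, ?_⟩
    apply Subtype.ext
    exact hwe.symm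

lemma card_sets : Nat.card {s : Finset (Fin k) // s.card = N} = k.choose N := by
  rw [Nat.card_eq_fintype_card, Fintype.card_subtype]
  rw [show (Finset.univ.filter fun s : Finset (Fin k) => s.card = N) =
      Finset.powersetCard N Finset.univ by
    ext s; simp [Finset.mem_powersetCard_univ, eq_comm]]
  rw [Finset.card_powersetCard, Finset.card_univ, Fintype.card_fin]

lemma card_inj (n : ℕ) :
    Nat.card {w : Fin N → Fin k // Function.Injective w ∧ decLen w ≤ n} =
      Nat.card {σ : Equiv.Perm (Fin N) // permIncLen σ ≤ n} * k.choose N := by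
  rw [← Nat.card_eq_of_bijective _ (bij_bijective (N := N) (k := k) n), Nat.card_prod, card_sets]

lemma card_noninj :
    Nat.card {w : Fin N → Fin k // ¬ Function.Injective w} = k ^ N - k.descFactorial N := by
  classical
  rw [Nat.card_eq_fintype_card, Fintype.card_subtype_compl]
  congr 1
  · simp [Fintype.card_fun]
  · rw [Fintype.card_congr (Equiv.subtypeInjectiveEquivEmbedding (Fin N) (Fin k)),
      Fintype.card_embedding_eq, Fintype.card_fin, Fintype.card_fin]

end FDaux

/-- As the alphabet size `k → ∞`, the distribution `F_D(n;k,N)` of the longest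
strictly decreasing subsequence of a random word converges to the distribution
`F_P(n;N)` of the longest increasing subsequence of a random permutation. -/
theorem FD_tendsto_FP (n N : ℕ) (hn : 1 ≤ n) :
    Filter.Tendsto (fun k : ℕ => FD n k N) Filter.atTop (𝓝 (FP n N)) := by
  classical
  set A : ℕ := Nat.card {σ : Equiv.Perm (Fin N) // permIncLen σ ≤ n} with hA
  -- limit of descFactorial / k^N
  have hdesc : Filter.Tendsto (fun k : ℕ => (k.descFactorial N : ℝ) / (k : ℝ) ^ N)
      Filter.atTop (𝓝 1) := by
    have hlim : Filter.Tendsto (fun k : ℕ => ∏ i ∈ Finset.range N, (1 - (i : ℝ) / k))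
        Filter.atTop (𝓝 1) := by
      have : Filter.Tendsto (fun k : ℕ => ∏ i ∈ Finset.range N, (1 - (i : ℝ) / k))
          Filter.atTop (𝓝 (∏ i ∈ Finset.range N, (1 : ℝ))) := by
        apply tendsto_finset_prod
        intro i _
        have := tendsto_const_div_atTop_nhds_zero_nat (i : ℝ)
        have h2 := (tendsto_const_nhds (x := (1:ℝ)) (f := Filter.atTop)).sub this
        simpa using h2
      simpa using this
    apply hlim.congr'
    filter_upwards [Filter.eventually_ge_atTop (max 1 N)] with k hk
    have hk1 : 1 ≤ k := le_trans (le_max_left _ _) hk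
    have hkN : N ≤ k := le_trans (le_max_right _ _) hk
    have hkpos : (0:ℝ) < (k:ℝ) := by exact_mod_cast hk1
    rw [Nat.descFactorial_eq_prod_range]
    push_cast [Nat.cast_prod]
    rw [show ((k:ℝ)) ^ N = ∏ _i ∈ Finset.range N, (k:ℝ) by
      rw [Finset.prod_const, Finset.card_range]]
    rw [← Finset.prod_div_distrib]
    apply Finset.prod_congr rfl
    intro i hi
    have hiN : i < N := Finset.mem_range.mp hi
    have : ((k - i : ℕ) : ℝ) = (k:ℝ) - i := by
      rw [Nat.cast_sub (le_of_lt (lt_of_lt_of_le hiN hkN))]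
    rw [this]
    field_simp
  -- lower bound function
  set L : ℕ → ℝ := fun k => (A : ℝ) * (k.choose N) / (k : ℝ) ^ N with hL
  have hLdesc : ∀ k : ℕ, L k = (A : ℝ) / (N.factorial : ℝ) *
      ((k.descFactorial N : ℝ) / (k : ℝ) ^ N) := by
    intro k
    have h1 : (k.descFactorial N : ℝ) = (N.factorial : ℝ) * (k.choose N : ℝ) := by
      exact_mod_cast congrArg (Nat.cast (R := ℝ)) (Nat.descFactorial_eq_factorial_mul_choose k N)
    rw [hL, h1]
    have hfac : (N.factorial : ℝ) ≠ 0 := by exact_mod_cast N.factorial_ne_zero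
    field_simp
  have hLlim : Filter.Tendsto L Filter.atTop (𝓝 (FP n N)) := by
    have : Filter.Tendsto (fun k : ℕ => (A : ℝ) / (N.factorial : ℝ) *
        ((k.descFactorial N : ℝ) / (k : ℝ) ^ N)) Filter.atTop
        (𝓝 ((A : ℝ) / (N.factorial : ℝ) * 1)) := hdesc.const_mul _
    rw [mul_one] at this
    have hFP : FP n N = (A : ℝ) / (N.factorial : ℝ) := rfl
    rw [hFP]
    exact this.congr (fun k => (hLdesc k).symm)
  -- upper bound function
  set U : ℕ → ℝ := fun k => L k + (1 - (k.descFactorial N : ℝ) / (k : ℝ) ^ N) with hU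
  have hUlim : Filter.Tendsto U Filter.atTop (𝓝 (FP n N)) := by
    have h0 : Filter.Tendsto (fun k : ℕ => 1 - (k.descFactorial N : ℝ) / (k : ℝ) ^ N)
        Filter.atTop (𝓝 0) := by
      have := (tendsto_const_nhds (x := (1:ℝ)) (f := Filter.atTop (α := ℕ))).sub hdesc
      simpa using this
    have := hLlim.add h0
    simpa using this
  -- squeeze
  apply tendsto_of_tendsto_of_tendsto_of_le_of_le' hLlim hUlim
  · filter_upwards [Filter.eventually_ge_atTop 1] with k hk1
    have hk0 : (0:ℝ) < (k:ℝ) := by exact_mod_cast hk1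
    have hkpos : (0:ℝ) < (k : ℝ) ^ N := by positivity
    have hnat : A * k.choose N ≤ Nat.card {w : Fin N → Fin k // decLen w ≤ n} := by
      rw [← FDaux.card_inj n, Nat.card_eq_fintype_card, Nat.card_eq_fintype_card]
      exact Fintype.card_subtype_mono _ _ (fun w hw => hw.2)
    have hcast : (A : ℝ) * (k.choose N) ≤
        (Nat.card {w : Fin N → Fin k // decLen w ≤ n} : ℝ) := by exact_mod_cast hnat
    show L k ≤ FD n k N
    rw [hL]
    unfold FD
    exact div_le_div_of_nonneg_right hcast hkpos.le |>.trans_eq rfl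
  · filter_upwards [Filter.eventually_ge_atTop 1] with k hk1
    have hk0 : (0:ℝ) < (k:ℝ) := by exact_mod_cast hk1
    have hkpos : (0:ℝ) < (k : ℝ) ^ N := by positivity
    have hnat : Nat.card {w : Fin N → Fin k // decLen w ≤ n} ≤
        A * k.choose N + (k ^ N - k.descFactorial N) := by
      rw [← FDaux.card_inj n, ← FDaux.card_noninj (N := N) (k := k)]
      rw [Nat.card_eq_fintype_card, Nat.card_eq_fintype_card, Nat.card_eq_fintype_card]
      calc Fintype.card {w : Fin N → Fin k // decLen w ≤ n}
          ≤ Fintype.card {w : Fin N → Fin k //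
              (Function.Injective w ∧ decLen w ≤ n) ∨ ¬ Function.Injective w} :=
            Fintype.card_subtype_mono _ _ (fun w hw =>
              (em (Function.Injective w)).elim (fun h => Or.inl ⟨h, hw⟩) Or.inr)
        _ ≤ _ := Fintype.card_subtype_or _ _
    have hle : k.descFactorial N ≤ k ^ N := Nat.descFactorial_le_pow k N
    have hcast : (Nat.card {w : Fin N → Fin k // decLen w ≤ n} : ℝ) ≤
        (A : ℝ) * (k.choose N) + ((k:ℝ) ^ N - (k.descFactorial N : ℝ)) := by
      calc (Nat.card {w : Fin N → Fin k // decLen w ≤ n} : ℝ)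
          ≤ ((A * k.choose N + (k ^ N - k.descFactorial N) : ℕ) : ℝ) := by exact_mod_cast hnat
        _ = _ := by push_cast [Nat.cast_sub hle]; ring
    show FD n k N ≤ U k
    have h1 : FD n k N ≤
        ((A : ℝ) * (k.choose N) + ((k:ℝ) ^ N - (k.descFactorial N : ℝ))) / (k:ℝ) ^ N := by
      unfold FD
      exact div_le_div_of_nonneg_right hcast hkpos.le |>.trans_eq rfl
    have h2 : ((A : ℝ) * (k.choose N) + ((k:ℝ) ^ N - (k.descFactorial N : ℝ))) / (k:ℝ) ^ N
        = U k := by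
      rw [hU, hL]
      rw [add_div, sub_div, div_self hkpos.ne']
    rw [← h2]
    exact h1
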